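/- (Rényi-to-KL under witness condition) Let L be a real random variable, η̄ > 0 with E[e^{-η̄L}] ≤ 1, and suppose for constants u > 0 and c ∈ (0,1] that E[L · 1{L ≤ u}] ≥ c E[L]. Then for all η ∈ (0, η̄): E[L] ≤ c_u · (1/η)(1 - E[e^{-ηL}]) ≤ c_u · (-(1/η) log E[e^{-ηL}]), where c_u := (1/c)(ηu + 1)/(1 - η/η̄). -/

import Mathlib

open MeasureTheory Real


private lemma exp_conv {a b : ℝ} (ha : 0 < a) (hab : a ≤ b) (x : ℝ) :
    Real.exp (-a * x) ≤ (a / b) * Real.exp (-b * x) + (1 - a / b) := by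
  have hb : 0 < b := lt_of_lt_of_le ha hab
  have h1 : (0:ℝ) ≤ a / b := by positivity
  have h2 : (0:ℝ) ≤ 1 - a / b := by
    have : a / b ≤ 1 := (div_le_one hb).2 hab
    linarith
  have h3 : a / b + (1 - a / b) = 1 := by ring
  have h := convexOn_exp.2 (Set.mem_univ (-b * x)) (Set.mem_univ (0:ℝ)) h1 h2 h3
  simp only [smul_eq_mul, mul_zero, Real.exp_zero, mul_one] at h
  have he : a / b * (-b * x) + 0 = -a * x := by
    field_simp
    ring
  rwa [he] at h

private lemma conv2 {a b : ℝ} (ha : 0 < a) (hab : a ≤ b) (x : ℝ) :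
    a * (1 - Real.exp (-b * x)) ≤ b * (1 - Real.exp (-a * x)) := by
  have hb : 0 < b := lt_of_lt_of_le ha hab
  have h := exp_conv ha hab x
  have h' := mul_le_mul_of_nonneg_left h hb.le
  have e : b * ((a / b) * Real.exp (-b * x) + (1 - a / b)) =
      a * Real.exp (-b * x) + (b - a) := by field_simp
  nlinarith [h', e]

private lemma E_nonneg (c x : ℝ) : 0 ≤ Real.exp (-c * x) - 1 + c * x := by
  have := Real.add_one_le_exp (-c * x)
  nlinarith [this]

private lemma L4 {a b x : ℝ} (ha : 0 < a) (hab : a ≤ b) (hx : x ≤ 0) :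
    b ^ 2 * (Real.exp (-a * x) - 1 + a * x) ≤ a ^ 2 * (Real.exp (-b * x) - 1 + b * x) := by
  have hb : 0 < b := lt_of_lt_of_le ha hab
  set f : ℝ → ℝ := fun y =>
    a ^ 2 * (Real.exp (-b * y) - 1 + b * y) - b ^ 2 * (Real.exp (-a * y) - 1 + a * y) with hf
  have hderiv : ∀ y, HasDerivAt f
      (a ^ 2 * (Real.exp (-b * y) * (-b) + b) - b ^ 2 * (Real.exp (-a * y) * (-a) + a)) y := by
    intro y
    have h1 : HasDerivAt (fun y : ℝ => -b * y) (-b) y := by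
      simpa using (hasDerivAt_id y).const_mul (-b)
    have h2 : HasDerivAt (fun y : ℝ => -a * y) (-a) y := by
      simpa using (hasDerivAt_id y).const_mul (-a)
    have hb1 : HasDerivAt (fun y : ℝ => b * y) b y := by
      simpa using (hasDerivAt_id y).const_mul b
    have ha1 : HasDerivAt (fun y : ℝ => a * y) a y := by
      simpa using (hasDerivAt_id y).const_mul a
    exact (((h1.exp.sub_const 1).add hb1).const_mul (a ^ 2)).sub
      (((h2.exp.sub_const 1).add ha1).const_mul (b ^ 2))
  have hanti : Antitone f := by
    apply antitone_of_deriv_nonpos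
    · intro y; exact (hderiv y).differentiableAt
    · intro y
      rw [(hderiv y).deriv]
      have h := conv2 ha hab y
      nlinarith [mul_nonneg (mul_nonneg ha.le hb.le)
        (sub_nonneg.2 h)]
  have h0 : f 0 = 0 := by simp [hf]
  have := hanti hx
  rw [h0] at this
  simp only [hf] at this
  linarith

private lemma L5 {a b u x : ℝ} (ha : 0 < a) (hab : a ≤ b) (hx : 0 ≤ x) (hxu : x ≤ u) :
    b ^ 2 * (1 + a * u) * (Real.exp (-a * x) - 1 + a * x)
      ≤ a ^ 2 * (1 + b * u) * (Real.exp (-b * x) - 1 + b * x) := by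
  have hb : 0 < b := lt_of_lt_of_le ha hab
  set P : ℝ → ℝ := fun c => (1 + c * u) * (Real.exp (-c * x) - 1 + c * x) / c ^ 2 with hP
  have hderiv : ∀ c : ℝ, 0 < c → HasDerivAt P
      (((u * (Real.exp (-c * x) - 1 + c * x)
          + (1 + c * u) * (Real.exp (-c * x) * (-x) + x)) * c ^ 2
        - (1 + c * u) * (Real.exp (-c * x) - 1 + c * x) * (2 * c)) / (c ^ 2) ^ 2) c := by
    intro c hc
    have h1 : HasDerivAt (fun c : ℝ => 1 + c * u) u c := by
      simpa using ((hasDerivAt_id c).mul_const u).const_add 1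
    have h2 : HasDerivAt (fun c : ℝ => -c * x) (-x) c := by
      have := ((hasDerivAt_id c).mul_const x).neg
      have hf : (fun c : ℝ => -c * x) = -fun y => id y * x := by funext y; simp [neg_mul]
      rw [hf]; exact this.congr_deriv (by ring)
    have h3 : HasDerivAt (fun c : ℝ => Real.exp (-c * x) - 1 + c * x)
        (Real.exp (-c * x) * (-x) + x) c := by
      have := (h2.exp.sub_const 1).add ((hasDerivAt_id c).mul_const x)
      exact this.congr_deriv (by ring)
    have hden : HasDerivAt (fun c : ℝ => c ^ 2) (2 * c) c := by
      simpa [mul_comm] using hasDerivAt_pow 2 c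
    exact (h1.mul h3).div hden (by positivity)
  have hnum : ∀ c : ℝ, 0 < c →
      0 ≤ (u * (Real.exp (-c * x) - 1 + c * x)
          + (1 + c * u) * (Real.exp (-c * x) * (-x) + x)) * c ^ 2
        - (1 + c * u) * (Real.exp (-c * x) - 1 + c * x) * (2 * c) := by
    intro c hc
    set E := Real.exp (-c * x) with hE
    have hEpos : 0 < E := Real.exp_pos _
    have hprod : Real.exp (c * x) * E = 1 := by
      rw [hE, ← Real.exp_add]; simp
    have hcx : 0 ≤ c * x := by positivity
    have hcxu : c * x ≤ c * u := by nlinarith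
    have hA : (1 + c * x + (c * x) ^ 2 / 2) * E ≤ 1 := by
      have hq := Real.quadratic_le_exp_of_nonneg hcx
      calc (1 + c * x + (c * x) ^ 2 / 2) * E ≤ Real.exp (c * x) * E :=
            mul_le_mul_of_nonneg_right hq hEpos.le
        _ = 1 := hprod
    have hB : (1 + c * x) * E ≤ 1 := by
      have hq := Real.add_one_le_exp (c * x)
      calc (1 + c * x) * E ≤ Real.exp (c * x) * E := by
            apply mul_le_mul_of_nonneg_right _ hEpos.le; linarith
        _ = 1 := hprod
    have p1 : 0 ≤ c * (1 - (1 + c * x + (c * x) ^ 2 / 2) * E) :=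
      mul_nonneg hc.le (by linarith)
    have p2 : 0 ≤ c * ((c * u - c * x) * (1 - (1 + c * x) * E)) :=
      mul_nonneg hc.le (mul_nonneg (by linarith) (by linarith))
    nlinarith [p1, p2]
  have hPab : P a ≤ P b := by
    rcases eq_or_lt_of_le hab with h | h
    · rw [h]
    · have hmono : MonotoneOn P (Set.Icc a b) := by
        apply monotoneOn_of_deriv_nonneg (convex_Icc a b)
        · apply ContinuousOn.div
          · fun_prop
          · fun_prop
          · intro c hc; exact pow_ne_zero 2 (ne_of_gt (lt_of_lt_of_le ha hc.1))
        · intro c hc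
          rw [interior_Icc] at hc
          exact ((hderiv c (ha.trans hc.1)).differentiableAt).differentiableWithinAt
        · intro c hc
          rw [interior_Icc] at hc
          have hc0 : 0 < c := ha.trans hc.1
          rw [(hderiv c hc0).deriv]
          exact div_nonneg (hnum c hc0) (by positivity)
      exact hmono (Set.left_mem_Icc.2 hab) (Set.right_mem_Icc.2 hab) hab
  have hP2 : (1 + a * u) * (Real.exp (-a * x) - 1 + a * x) / a ^ 2
      ≤ (1 + b * u) * (Real.exp (-b * x) - 1 + b * x) / b ^ 2 := hPab
  rw [div_le_div_iff₀ (by positivity) (by positivity)] at hP2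
  nlinarith [hP2]

private lemma key_pointwise {a b u : ℝ} (ha : 0 < a) (hab : a < b) (hu : 0 < u) (x : ℝ) :
    a * b * (b - a) * (if x ≤ u then x else 0)
      ≤ b ^ 2 * (1 + a * u) * (1 - Real.exp (-a * x))
        - a ^ 2 * (1 + b * u) * (1 - Real.exp (-b * x)) := by
  have hb : 0 < b := ha.trans hab
  by_cases hxu : x ≤ u
  · rw [if_pos hxu]
    have core : b ^ 2 * (1 + a * u) * (Real.exp (-a * x) - 1 + a * x)
        ≤ a ^ 2 * (1 + b * u) * (Real.exp (-b * x) - 1 + b * x) := by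
      rcases le_or_gt x 0 with hx | hx
      · have h4 := L4 ha hab.le hx
        have hEa := E_nonneg a x
        have hEb := E_nonneg b x
        have hau : 0 ≤ 1 + a * u := by positivity
        have habu : a * u ≤ b * u := by nlinarith
        nlinarith [mul_le_mul_of_nonneg_left h4 hau,
          mul_nonneg (mul_nonneg (sq_nonneg a) (sub_nonneg.2 habu)) hEb]
      · exact L5 ha hab.le hx.le hxu
    nlinarith [core]
  · rw [if_neg hxu]
    push_neg at hxu
    have hx : 0 < x := hu.trans hxu
    have hc := conv2 ha hab.le x
    have hEb' : 0 ≤ 1 - Real.exp (-b * x) := by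
      have : Real.exp (-b * x) ≤ 1 := by
        rw [Real.exp_le_one_iff]; nlinarith
      linarith
    nlinarith [mul_le_mul_of_nonneg_left hc (mul_nonneg hb.le (by positivity : (0:ℝ) ≤ 1 + a * u)),
      mul_nonneg (mul_nonneg ha.le (sub_nonneg.2 hab.le)) hEb']

/-- Rényi-to-KL under the witness condition: if `E[e^{-η̄L}] ≤ 1` (strong central
condition) and `E[L·1{L ≤ u}] ≥ c E[L]` ((u,c)-witness condition), then for all
`η ∈ (0, η̄)`:
`E[L] ≤ c_u · (1/η)(1 - E[e^{-ηL}]) ≤ c_u · (-(1/η) log E[e^{-ηL}])`,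
where `c_u = (1/c)(ηu + 1)/(1 - η/η̄)`. -/
theorem renyi_to_kl_witness
    {Ω : Type*} [MeasurableSpace Ω] (μ : Measure Ω) [IsProbabilityMeasure μ]
    (L : Ω → ℝ) (hLmeas : Measurable L)
    {ηbar u c : ℝ} (hηbar : 0 < ηbar) (hu : 0 < u) (hc0 : 0 < c) (hc1 : c ≤ 1)
    (hL : Integrable L μ)
    (hcentralInt : Integrable (fun ω => Real.exp (-ηbar * L ω)) μ)
    (hcentral : ∫ ω, Real.exp (-ηbar * L ω) ∂μ ≤ 1)
    (hwitness : c * ∫ ω, L ω ∂μ ≤ ∫ ω, (if L ω ≤ u then L ω else 0) ∂μ) :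
    ∀ η : ℝ, 0 < η → η < ηbar →
      Integrable (fun ω => Real.exp (-η * L ω)) μ →
      (∫ ω, L ω ∂μ
          ≤ ((1/c) * (η * u + 1) / (1 - η / ηbar))
              * ((1/η) * (1 - ∫ ω, Real.exp (-η * L ω) ∂μ)))
      ∧ (((1/c) * (η * u + 1) / (1 - η / ηbar))
              * ((1/η) * (1 - ∫ ω, Real.exp (-η * L ω) ∂μ))
          ≤ ((1/c) * (η * u + 1) / (1 - η / ηbar))
              * (-(1/η) * Real.log (∫ ω, Real.exp (-η * L ω) ∂μ))) := by
  intro η hη hηb hInt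
  have hb : 0 < ηbar := hηbar
  set Z : ℝ := ∫ ω, Real.exp (-η * L ω) ∂μ with hZ
  set Zb : ℝ := ∫ ω, Real.exp (-ηbar * L ω) ∂μ with hZb
  set I : ℝ := ∫ ω, L ω ∂μ with hI
  set W : ℝ := ∫ ω, (if L ω ≤ u then L ω else 0) ∂μ with hW
  have hratio : η / ηbar < 1 := (div_lt_one hb).2 hηb
  have hden : 0 < 1 - η / ηbar := by linarith
  -- integrability of the witness integrand
  have hWmeas : Measurable (fun ω => if L ω ≤ u then L ω else 0) :=
    Measurable.ite (measurableSet_le hLmeas measurable_const) hLmeas measurable_const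
  have hWint : Integrable (fun ω => if L ω ≤ u then L ω else 0) μ := by
    refine hL.mono hWmeas.aestronglyMeasurable (Filter.Eventually.of_forall fun ω => ?_)
    by_cases h : L ω ≤ u <;> simp [h, abs_nonneg]
  have h1 : Integrable (fun ω => 1 - Real.exp (-η * L ω)) μ := (integrable_const 1).sub hInt
  have h2 : Integrable (fun ω => 1 - Real.exp (-ηbar * L ω)) μ :=
    (integrable_const 1).sub hcentralInt
  have e1 : ∫ ω, (1 - Real.exp (-η * L ω)) ∂μ = 1 - Z := by
    rw [integral_sub (integrable_const 1) hInt]; simp [hZ]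
  have e2 : ∫ ω, (1 - Real.exp (-ηbar * L ω)) ∂μ = 1 - Zb := by
    rw [integral_sub (integrable_const 1) hcentralInt]; simp [hZb]
  have hnonneg : 0 ≤ ∫ ω,
      (ηbar ^ 2 * (1 + η * u) * (1 - Real.exp (-η * L ω))
        - η ^ 2 * (1 + ηbar * u) * (1 - Real.exp (-ηbar * L ω))
        - η * ηbar * (ηbar - η) * (if L ω ≤ u then L ω else 0)) ∂μ := by
    refine integral_nonneg fun ω => ?_
    have := key_pointwise hη hηb hu (L ω)
    simp only [Pi.zero_apply]
    linarith
  have hIntA : Integrable (fun ω =>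
      ηbar ^ 2 * (1 + η * u) * (1 - Real.exp (-η * L ω))
        - η ^ 2 * (1 + ηbar * u) * (1 - Real.exp (-ηbar * L ω))) μ :=
    (h1.const_mul _).sub (h2.const_mul _)
  have heq : ∫ ω,
      (ηbar ^ 2 * (1 + η * u) * (1 - Real.exp (-η * L ω))
        - η ^ 2 * (1 + ηbar * u) * (1 - Real.exp (-ηbar * L ω))
        - η * ηbar * (ηbar - η) * (if L ω ≤ u then L ω else 0)) ∂μ
      = ηbar ^ 2 * (1 + η * u) * (1 - Z) - η ^ 2 * (1 + ηbar * u) * (1 - Zb)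
        - η * ηbar * (ηbar - η) * W := by
    rw [integral_sub hIntA (hWint.const_mul _),
      integral_sub (h1.const_mul _) (h2.const_mul _),
      integral_const_mul, integral_const_mul, integral_const_mul, e1, e2]
  rw [heq] at hnonneg
  have hZbn : 0 ≤ η ^ 2 * (1 + ηbar * u) * (1 - Zb) := by
    have : 0 ≤ 1 - Zb := by simp only [hZb]; linarith [hcentral]
    positivity
  have hmain : η * ηbar * (ηbar - η) * W ≤ ηbar ^ 2 * (1 + η * u) * (1 - Z) := by linarith
  have hfirst : I ≤ ((1/c) * (η * u + 1) / (1 - η / ηbar)) * ((1/η) * (1 - Z)) := by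
    have hcne : c ≠ 0 := hc0.ne'
    have hηne : η ≠ 0 := hη.ne'
    have hbne : ηbar ≠ 0 := hb.ne'
    have hdenne : (1 - η / ηbar) ≠ 0 := hden.ne'
    have hpos : (0:ℝ) < η * ηbar * (ηbar - η) := by
      apply mul_pos (mul_pos hη hb); linarith
    have hRR : ((1/c) * (η * u + 1) / (1 - η / ηbar)) * ((1/η) * (1 - Z))
        = (ηbar ^ 2 * (1 + η * u) * (1 - Z)) / (c * (η * ηbar * (ηbar - η))) := by
      have haux : η * ηbar * c - η ^ 2 * c ≠ 0 :=
        ne_of_gt (by nlinarith [mul_pos (mul_pos hη hc0) (sub_pos.2 hηb)])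
      have hDD : (η * ηbar * c - η ^ 2 * c) * (η * ηbar * c - η ^ 2 * c)⁻¹ = 1 :=
        mul_inv_cancel₀ haux
      rw [eq_div_iff (mul_pos hc0 hpos).ne']
      have hsub : ηbar - η ≠ 0 := (sub_pos.2 hηb).ne'
      field_simp
      ring
    rw [hRR, le_div_iff₀ (mul_pos hc0 hpos)]
    have hw' := mul_le_mul_of_nonneg_right hwitness hpos.le
    nlinarith [hw', hmain]
  refine ⟨hfirst, ?_⟩
  have hZpos : 0 < Z := by
    have : NeZero μ := ⟨IsProbabilityMeasure.ne_zero μ⟩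
    exact integral_exp_pos hInt
  have hlog : Real.log Z ≤ Z - 1 := Real.log_le_sub_one_of_pos hZpos
  have hcu : 0 ≤ (1/c) * (η * u + 1) / (1 - η / ηbar) := by
    apply div_nonneg _ hden.le
    positivity
  apply mul_le_mul_of_nonneg_left _ hcu
  have hinv : 0 ≤ 1/η := by positivity
  nlinarith [mul_nonneg hinv (by linarith : (0:ℝ) ≤ Z - 1 - Real.log Z)]
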